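/- Let 𝐗₁ = (X,𝕏₁) and 𝐗₂ = (X,𝕏₂) be p-rough paths controlled by ω on [0,T] with the same trace X, and let (H,H') ∈ 𝒟_X(L(ℝ^d,ℝ^e)). Then D_{st} := 𝕏₂;st − 𝕏₁;st satisfies D_{st} = D_{su} + D_{ut} for s ≤ u ≤ t and |D_{st}| ≤ C ω(s,t)^{2/p} for some constant C, and for all 0 ≤ s ≤ t ≤ T: ∫_s^t H d𝐗₂ = ∫_s^t H d𝐗₁ + ∫_s^t H' dD, where the last term is the Young integral of H' against D. In particular, taking 𝐗₂ to be the geometrisation g𝐗₁, one has ∫_s^t H d(g𝐗₁) = ∫_s^t H d𝐗₁ + ½ ∫_s^t H' d[𝐗₁]. -/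

import Mathlib

open Filter Topology Set

noncomputable section

/-- `ω` is a control on `[0,T]`: continuous on the simplex, vanishing on the diagonal,
superadditive and nonnegative. -/
def IsControl (T : ℝ) (ω : ℝ → ℝ → ℝ) : Prop :=
  ContinuousOn (fun q : ℝ × ℝ => ω q.1 q.2) {q : ℝ × ℝ | 0 ≤ q.1 ∧ q.1 ≤ q.2 ∧ q.2 ≤ T} ∧
    (∀ t : ℝ, 0 ≤ t → t ≤ T → ω t t = 0) ∧
    (∀ s u t : ℝ, 0 ≤ s → s ≤ u → u ≤ t → t ≤ T → ω s u + ω u t ≤ ω s t) ∧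
    (∀ s t : ℝ, 0 ≤ s → s ≤ t → t ≤ T → 0 ≤ ω s t)

/-- Membership in `C^{1/r}_ω([0,T],V)`: continuity on `[0,T]` together with the increment
bound `‖Y_t − Y_s‖ ≤ C ω(s,t)^r`. -/
def HolderPath (T r : ℝ) (ω : ℝ → ℝ → ℝ) {V : Type*} [NormedAddCommGroup V]
    (Y : ℝ → V) : Prop :=
  ContinuousOn Y (Set.Icc 0 T) ∧
    ∃ C : ℝ, ∀ s t : ℝ, 0 ≤ s → s ≤ t → t ≤ T → ‖Y t - Y s‖ ≤ C * ω s t ^ r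

/-- `(X, XX)` is a `p`-rough path controlled by `ω` on `[0,T]`. -/
def IsRoughPath (T p : ℝ) (ω : ℝ → ℝ → ℝ) {d : ℕ}
    (X : ℝ → Fin d → ℝ) (XX : ℝ → ℝ → Fin d → Fin d → ℝ) : Prop :=
  HolderPath T (1 / p) ω X ∧
    ContinuousOn (fun q : ℝ × ℝ => XX q.1 q.2) {q : ℝ × ℝ | 0 ≤ q.1 ∧ q.1 ≤ q.2 ∧ q.2 ≤ T} ∧
    (∃ C : ℝ, ∀ s t : ℝ, 0 ≤ s → s ≤ t → t ≤ T → ‖XX s t‖ ≤ C * ω s t ^ (2 / p)) ∧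
    (∀ s u t : ℝ, 0 ≤ s → s ≤ u → u ≤ t → t ≤ T → ∀ α β : Fin d,
      XX s t α β = XX s u α β + (X u α - X s α) * (X t β - X u β) + XX u t α β)

/-- `(H, H')` is an `X`-controlled path with values in `V`; `H' t γ` is the Gubinelli
derivative at time `t` in the direction of the `γ`-th coordinate. -/
def IsControlledPath (T p : ℝ) (ω : ℝ → ℝ → ℝ) {d : ℕ} (X : ℝ → Fin d → ℝ)
    {V : Type*} [NormedAddCommGroup V] [NormedSpace ℝ V]
    (H : ℝ → V) (H' : ℝ → Fin d → V) : Prop :=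
  HolderPath T (1 / p) ω H ∧ HolderPath T (1 / p) ω H' ∧
    ∃ C : ℝ, ∀ s t : ℝ, 0 ≤ s → s ≤ t → t ≤ T →
      ‖H t - H s - ∑ γ, (X t γ - X s γ) • H' s γ‖ ≤ C * ω s t ^ (2 / p)

/-- The bracket `[𝐗]` of the rough path `(X, XX)`. -/
def bracket {d : ℕ} (X : ℝ → Fin d → ℝ) (XX : ℝ → ℝ → Fin d → Fin d → ℝ)
    (s t : ℝ) (α β : Fin d) : ℝ :=
  (X t α - X s α) * (X t β - X s β) - (XX s t α β + XX s t β α)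

/-- A partition of `[s,t]` into `n` consecutive intervals. -/
structure RPathPartition (s t : ℝ) where
  n : ℕ
  pts : ℕ → ℝ
  mono : Monotone pts
  first : pts 0 = s
  last : pts n = t

/-- The mesh of a partition. -/
def RPathPartition.mesh {s t : ℝ} (π : RPathPartition s t) : ℝ :=
  ⨆ i : Fin π.n, (π.pts (i.1 + 1) - π.pts i.1)

/-- The Riemann sum of a two-parameter summand along a partition. -/
def riemannSum {s t : ℝ} {V : Type*} [AddCommMonoid V]
    (π : RPathPartition s t) (f : ℝ → ℝ → V) : V :=
  ∑ i ∈ Finset.range π.n, f (π.pts i) (π.pts (i + 1))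

/-- `L` is the limit of the Riemann sums of `f` along every sequence of partitions of `[s,t]`
with mesh tending to `0`. -/
def RSumLimit {V : Type*} [AddCommMonoid V] [TopologicalSpace V] (s t : ℝ)
    (f : ℝ → ℝ → V) (L : V) : Prop :=
  ∀ π : ℕ → RPathPartition s t,
    Tendsto (fun n => (π n).mesh) atTop (𝓝 0) →
      Tendsto (fun n => riemannSum (π n) f) atTop (𝓝 L)

/-- The compensated Riemann summand `H_u X_{uv} + H'_u 𝕏_{uv}` of a controlled integrand
against a rough path. -/
def roughSummand {d e : ℕ} (X : ℝ → Fin d → ℝ) (XX : ℝ → ℝ → Fin d → Fin d → ℝ)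
    (H : ℝ → Fin e → Fin d → ℝ) (H' : ℝ → Fin d → Fin e → Fin d → ℝ) :
    ℝ → ℝ → Fin e → ℝ :=
  fun u v k => (∑ γ, H u k γ * (X v γ - X u γ)) + ∑ α, ∑ β, H' u α k β * XX u v α β

/-- The partial derivative `∂_α f^i (x)`. -/
def pderiv {m n : ℕ} (f : (Fin m → ℝ) → (Fin n → ℝ)) (x : Fin m → ℝ)
    (α : Fin m) (i : Fin n) : ℝ :=
  fderiv ℝ f x (Pi.single α 1) i

/-- The second partial derivative `∂_{αβ} f^k (x)`. -/
def pderiv2 {m n : ℕ} (f : (Fin m → ℝ) → (Fin n → ℝ)) (x : Fin m → ℝ)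
    (α β : Fin m) (k : Fin n) : ℝ :=
  fderiv ℝ (fun y => fderiv ℝ f y (Pi.single β 1) k) x (Pi.single α 1)

namespace Sew


variable {V : Type*} [NormedAddCommGroup V]

/-- sum of `f` over consecutive pairs of an indexed point family -/
def isum (f : ℝ → ℝ → V) (g : ℕ → ℝ) (n : ℕ) : V := ∑ i ∈ Finset.range n, f (g i) (g (i+1))

def MonoOn (g : ℕ → ℝ) (n : ℕ) : Prop := ∀ i j : ℕ, i ≤ j → j ≤ n → g i ≤ g j

structure Ctl (T : ℝ) (ω : ℝ → ℝ → ℝ) : Prop where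
  zero : ∀ t, 0 ≤ t → t ≤ T → ω t t = 0
  sup : ∀ s u t, 0 ≤ s → s ≤ u → u ≤ t → t ≤ T → ω s u + ω u t ≤ ω s t
  nn : ∀ s t, 0 ≤ s → s ≤ t → t ≤ T → 0 ≤ ω s t

variable {T : ℝ} {ω : ℝ → ℝ → ℝ}

lemma Ctl.mono (hω : Ctl T ω) {a s t b : ℝ} (ha : 0 ≤ a) (h1 : a ≤ s) (h2 : s ≤ t)
    (h3 : t ≤ b) (hb : b ≤ T) : ω s t ≤ ω a b := by
  have h4 := hω.sup a s b ha h1 (h2.trans h3) hb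
  have h5 := hω.sup s t b (ha.trans h1) h2 h3 hb
  have h6 := hω.nn a s ha h1 (by linarith)
  have h7 := hω.nn t b (le_trans (ha.trans h1) h2) h3 hb
  linarith

lemma chain_sum (hω : Ctl T ω) (g : ℕ → ℝ) (h0 : 0 ≤ g 0) :
    ∀ n, MonoOn g n → g n ≤ T →
      ∑ i ∈ Finset.range n, ω (g i) (g (i+1)) ≤ ω (g 0) (g n)
  | 0, _, hT => by simpa using hω.nn (g 0) (g 0) h0 le_rfl hT
  | (n+1), hg, hT => by
    rw [Finset.sum_range_succ]
    have hmono : MonoOn g n := fun i j hij hj => hg i j hij (hj.trans n.le_succ)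
    have h1 : g n ≤ T := le_trans (hg n (n+1) n.le_succ le_rfl) hT
    have ih := chain_sum hω g h0 n hmono h1
    have hsup := hω.sup (g 0) (g n) (g (n+1)) h0 (hg 0 n (Nat.zero_le n) n.le_succ)
      (hg n (n+1) n.le_succ le_rfl) hT
    linarith

variable {f : ℝ → ℝ → V} {C θ : ℝ}

lemma fdiag (hω : Ctl T ω) (hθ : 0 < θ)
    (hδ : ∀ s u t : ℝ, 0 ≤ s → s ≤ u → u ≤ t → t ≤ T → ‖f s t - f s u - f u t‖ ≤ C * ω s t ^ θ)
    {u : ℝ} (h0 : 0 ≤ u) (hT : u ≤ T) : f u u = 0 := by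
  have h := hδ u u u h0 le_rfl le_rfl hT
  rw [hω.zero u h0 hT, Real.zero_rpow (ne_of_gt hθ), mul_zero] at h
  have : ‖f u u‖ ≤ 0 := by simpa using h
  simpa using norm_le_zero_iff.1 this

def PS (θ : ℝ) (n : ℕ) : ℝ := ∑ k ∈ Finset.range n, ((k:ℝ)^θ)⁻¹

lemma PS_nonneg (θ : ℝ) (n : ℕ) : 0 ≤ PS θ n :=
  Finset.sum_nonneg fun k _ => by positivity

lemma PS_le (hθ : 1 < θ) (n : ℕ) : PS θ n ≤ ∑' k : ℕ, ((k:ℝ)^θ)⁻¹ :=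
  Summable.sum_le_tsum _ (fun k _ => by positivity) ((Real.summable_nat_rpow_inv).2 hθ)


lemma stepA (hω : Ctl T ω) (hθ : 1 < θ) (hC : 0 ≤ C)
    (hδ : ∀ s u t : ℝ, 0 ≤ s → s ≤ u → u ≤ t → t ≤ T → ‖f s t - f s u - f u t‖ ≤ C * ω s t ^ θ) :
    ∀ n : ℕ, ∀ g : ℕ → ℝ, MonoOn g n → 0 ≤ g 0 → g n ≤ T →
      ‖isum f g n - f (g 0) (g n)‖ ≤ C * 2 ^ θ * ω (g 0) (g n) ^ θ * PS θ n := by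
  have hθ0 : (0:ℝ) < θ := lt_trans one_pos hθ
  intro n
  induction n using Nat.strong_induction_on with
  | _ n IH =>
    match n with
    | 0 =>
      intro g hg h0 hT
      simp only [isum, Finset.range_zero, Finset.sum_empty, PS, zero_sub, norm_neg, mul_zero]
      rw [fdiag hω hθ0 hδ h0 hT, norm_zero]
    | 1 =>
      intro g hg h0 hT
      simp only [isum, Finset.sum_range_one, PS, Real.zero_rpow (ne_of_gt hθ0),
        Nat.cast_zero, sub_self, norm_zero, Finset.range_one, Finset.sum_singleton,
        inv_zero, mul_zero]
      exact le_rfl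
    | (n+2) =>
      intro g hg h0 hT
      set J : ℕ := (n+2)/2 with hJ
      have hJ1 : 1 ≤ J := by omega
      have h2J : 2*J ≤ n+2 := by omega
      have hn2J : n+1 ≤ 2*J := by omega
      set w := ω (g 0) (g (n+2)) with hw
      have hw0 : 0 ≤ w := hω.nn _ _ h0 (hg 0 (n+2) (Nat.zero_le _) le_rfl) hT
      -- pigeonhole over even pairs
      have hsum2 : ∑ j ∈ Finset.range J, ω (g (2*j)) (g (2*j+2)) ≤ w := by
        have hmono2 : MonoOn (fun j => g (2*j)) J := fun i j hij hj =>
          hg (2*i) (2*j) (by omega) (by omega)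
        have hcs := chain_sum hω (fun j => g (2*j)) (by simpa using h0) J hmono2
          (le_trans (hg (2*J) (n+2) h2J le_rfl) hT)
        simp only [Nat.mul_succ, Nat.mul_zero] at hcs
        refine le_trans hcs (hω.mono h0 (hg 0 0 le_rfl (by omega)) ?_ (hg (2*J) (n+2) h2J le_rfl) hT)
        exact hg 0 (2*J) (Nat.zero_le _) h2J
      have hpig : ∃ j, j < J ∧ ω (g (2*j)) (g (2*j+2)) ≤ w / J := by
        by_contra hcon
        push_neg at hcon
        have hlt : ∑ _j ∈ Finset.range J, (w / (J:ℝ)) <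
            ∑ j ∈ Finset.range J, ω (g (2*j)) (g (2*j+2)) := by
          refine Finset.sum_lt_sum_of_nonempty ⟨0, Finset.mem_range.2 (by omega)⟩ fun j hj => ?_
          exact hcon j (Finset.mem_range.1 hj)
        rw [Finset.sum_const, Finset.card_range, nsmul_eq_mul] at hlt
        have hJR : (0:ℝ) < (J:ℝ) := by exact_mod_cast hJ1
        have : (J:ℝ) * (w / J) = w := by field_simp
        linarith
      obtain ⟨j, hjJ, hjbound⟩ := hpig
      set a := 2*j with ha
      have haub : a + 2 ≤ n + 2 := by omega
      -- the partition with point a+1 removed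
      set g' : ℕ → ℝ := fun k => if k ≤ a then g k else g (k+1) with hg'
      have hg'0 : g' 0 = g 0 := by simp [hg']
      have hg'n : g' (n+1) = g (n+2) := by
        simp only [hg']
        rw [if_neg (by omega)]
      have hg'mono : MonoOn g' (n+1) := by
        intro i k hik hk
        simp only [hg']
        by_cases hi : i ≤ a <;> by_cases hk2 : k ≤ a
        · rw [if_pos hi, if_pos hk2]; exact hg i k hik (by omega)
        · rw [if_pos hi, if_neg hk2]; exact hg i (k+1) (by omega) (by omega)
        · omega
        · rw [if_neg hi, if_neg hk2]; exact hg (i+1) (k+1) (by omega) (by omega)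
      -- sum identity
      have key : isum f g' (n+1) = isum f g (n+2) +
          (f (g a) (g (a+2)) - f (g a) (g (a+1)) - f (g (a+1)) (g (a+2))) := by
        have e1 : isum f g' (n+1) = (∑ k ∈ Finset.range a, f (g k) (g (k+1)))
            + (f (g a) (g (a+2)) + ∑ k ∈ Finset.Ico (a+1) (n+1), f (g (k+1)) (g (k+2))) := by
          rw [isum, ← Finset.sum_range_add_sum_Ico _ (show a ≤ n+1 by omega)]
          congr 1
          · refine Finset.sum_congr rfl fun k hk => ?_
            have hk' := Finset.mem_range.1 hk
            simp only [hg']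
            rw [if_pos (by omega), if_pos (by omega)]
          · rw [Finset.sum_eq_sum_Ico_succ_bot (by omega : a < n+1)]
            congr 1
            · simp only [hg']
              rw [if_pos le_rfl, if_neg (by omega)]
            · refine Finset.sum_congr rfl fun k hk => ?_
              have hk' := Finset.mem_Ico.1 hk
              simp only [hg']
              rw [if_neg (by omega), if_neg (by omega)]
        have e2 : isum f g (n+2) = (∑ k ∈ Finset.range a, f (g k) (g (k+1)))
            + (f (g a) (g (a+1)) + (f (g (a+1)) (g (a+2))
              + ∑ k ∈ Finset.Ico (a+2) (n+2), f (g k) (g (k+1)))) := by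
          rw [isum, ← Finset.sum_range_add_sum_Ico _ (show a ≤ n+2 by omega)]
          congr 1
          rw [Finset.sum_eq_sum_Ico_succ_bot (by omega : a < n+2),
            Finset.sum_eq_sum_Ico_succ_bot (by omega : a+1 < n+2)]
        have e3 : ∑ k ∈ Finset.Ico (a+1) (n+1), f (g (k+1)) (g (k+2)) =
            ∑ k ∈ Finset.Ico (a+2) (n+2), f (g k) (g (k+1)) := by
          rw [Finset.sum_Ico_eq_sum_range, Finset.sum_Ico_eq_sum_range]
          rw [show n+1-(a+1) = n-a by omega, show n+2-(a+2) = n-a by omega]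
          refine Finset.sum_congr rfl fun k _ => ?_
          rw [show a+1+k+1 = a+2+k by omega, show a+1+k+2 = a+2+k+1 by omega]
        rw [e1, e2, e3]
        abel
      -- removal cost
      have hga0 : 0 ≤ g a := le_trans h0 (hg 0 a (Nat.zero_le _) (by omega))
      have hgaT : g (a+2) ≤ T := le_trans (hg (a+2) (n+2) haub le_rfl) hT
      have hcost : ‖f (g a) (g (a+2)) - f (g a) (g (a+1)) - f (g (a+1)) (g (a+2))‖ ≤
          C * 2^θ * w^θ * (((n+1:ℕ):ℝ)^θ)⁻¹ := by
        have h1 := hδ (g a) (g (a+1)) (g (a+2)) hga0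
          (hg a (a+1) (by omega) (by omega)) (hg (a+1) (a+2) (by omega) haub) hgaT
        have hωa : ω (g a) (g (a+2)) ≤ 2*w/((n+1:ℕ):ℝ) := by
          refine le_trans hjbound ?_
          have hJR : (0:ℝ) < (J:ℝ) := by exact_mod_cast hJ1
          have hn1 : (0:ℝ) < ((n+1:ℕ):ℝ) := by positivity
          rw [div_le_div_iff₀ hJR hn1]
          have : ((n+1:ℕ):ℝ) ≤ 2*(J:ℝ) := by exact_mod_cast hn2J
          nlinarith
        have hωnn : 0 ≤ ω (g a) (g (a+2)) :=
          hω.nn _ _ hga0 (hg a (a+2) (by omega) haub) hgaT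
        have h2 : ω (g a) (g (a+2)) ^ θ ≤ (2*w/((n+1:ℕ):ℝ))^θ :=
          Real.rpow_le_rpow hωnn hωa (le_of_lt hθ0)
        have h3 : (2*w/((n+1:ℕ):ℝ))^θ = 2^θ * w^θ * (((n+1:ℕ):ℝ)^θ)⁻¹ := by
          rw [Real.div_rpow (by positivity) (by positivity),
            Real.mul_rpow (by norm_num) hw0, div_eq_mul_inv]
        calc ‖f (g a) (g (a+2)) - f (g a) (g (a+1)) - f (g (a+1)) (g (a+2))‖
            ≤ C * ω (g a) (g (a+2)) ^ θ := h1
          _ ≤ C * (2*w/((n+1:ℕ):ℝ))^θ := by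
              exact mul_le_mul_of_nonneg_left h2 hC
          _ = C * (2^θ * w^θ * (((n+1:ℕ):ℝ)^θ)⁻¹) := by rw [h3]
          _ = C * 2^θ * w^θ * (((n+1:ℕ):ℝ)^θ)⁻¹ := by ring
      -- inductive step
      have hIH := IH (n+1) (by omega) g' hg'mono (by rw [hg'0]; exact h0)
        (by rw [hg'n]; exact hT)
      rw [hg'0, hg'n, ← hw] at hIH
      have hfin : ‖isum f g (n+2) - f (g 0) (g (n+2))‖ ≤
          C * 2^θ * w^θ * PS θ (n+1) + C * 2^θ * w^θ * (((n+1:ℕ):ℝ)^θ)⁻¹ := by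
        have : isum f g (n+2) - f (g 0) (g (n+2)) = (isum f g' (n+1) - f (g 0) (g (n+2)))
            + (f (g a) (g (a+1)) + f (g (a+1)) (g (a+2)) - f (g a) (g (a+2))) := by
          rw [key]; abel
        rw [this]
        refine le_trans (norm_add_le _ _) (add_le_add hIH ?_)
        have : f (g a) (g (a+1)) + f (g (a+1)) (g (a+2)) - f (g a) (g (a+2)) =
            -(f (g a) (g (a+2)) - f (g a) (g (a+1)) - f (g (a+1)) (g (a+2))) := by abel
        rw [this, norm_neg]
        exact hcost
      have hPS : PS θ (n+2) = PS θ (n+1) + (((n+1:ℕ):ℝ)^θ)⁻¹ := by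
        rw [PS, PS, Finset.sum_range_succ]
      rw [hPS]
      calc ‖isum f g (n+2) - f (g 0) (g (n+2))‖ ≤ _ := hfin
        _ = C * 2^θ * w^θ * (PS θ (n+1) + (((n+1:ℕ):ℝ)^θ)⁻¹) := by ring

lemma refine (hω : Ctl T ω) (hθ : 1 < θ) (hC : 0 ≤ C)
    (hδ : ∀ s u t : ℝ, 0 ≤ s → s ≤ u → u ≤ t → t ≤ T → ‖f s t - f s u - f u t‖ ≤ C * ω s t ^ θ)
    (g : ℕ → ℝ) (n : ℕ) (h : ℕ → ℝ) (m : ℕ) (φ : ℕ → ℕ)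
    (hφmono : ∀ i j : ℕ, i ≤ j → j ≤ n → φ i ≤ φ j) (hφ0 : φ 0 = 0) (hφn : φ n = m)
    (hgh : ∀ jj, jj ≤ n → h (φ jj) = g jj)
    (hh : MonoOn h m) (hh0 : 0 ≤ h 0) (hhT : h m ≤ T) :
    ‖isum f h m - isum f g n‖ ≤
      (C * 2^θ * (∑' k : ℕ, ((k:ℝ)^θ)⁻¹)) * ∑ jj ∈ Finset.range n, ω (g jj) (g (jj+1)) ^ θ := by
  have hsplit : ∀ N : ℕ, N ≤ n → ∑ k ∈ Finset.range (φ N), f (h k) (h (k+1)) =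
      ∑ jj ∈ Finset.range N, ∑ k ∈ Finset.Ico (φ jj) (φ (jj+1)), f (h k) (h (k+1)) := by
    intro N
    induction N with
    | zero => intro _; simp [hφ0]
    | succ N ihN =>
      intro hN
      rw [Finset.sum_range_succ, ← ihN (by omega), Finset.range_eq_Ico, Finset.range_eq_Ico]
      exact (Finset.sum_Ico_consecutive (f := fun k => f (h k) (h (k+1))) (Nat.zero_le (φ N))
        (hφmono N (N+1) (by omega) hN)).symm
  have hmain : isum f h m - isum f g n = ∑ jj ∈ Finset.range n,
      ((∑ k ∈ Finset.Ico (φ jj) (φ (jj+1)), f (h k) (h (k+1))) - f (g jj) (g (jj+1))) := by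
    rw [Finset.sum_sub_distrib, isum, isum, ← hsplit n le_rfl, hφn]
  rw [hmain]
  refine le_trans (norm_sum_le _ _) ?_
  rw [Finset.mul_sum]
  refine Finset.sum_le_sum fun jj hjj => ?_
  have hjn := Finset.mem_range.1 hjj
  have hφj : φ jj ≤ φ (jj+1) := hφmono jj (jj+1) (by omega) hjn
  have hφjm : φ (jj+1) ≤ m := by rw [← hφn]; exact hφmono (jj+1) n hjn le_rfl
  set N' := φ (jj+1) - φ jj with hN'
  have hblock : ∑ k ∈ Finset.Ico (φ jj) (φ (jj+1)), f (h k) (h (k+1)) =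
      isum f (fun k => h (φ jj + k)) N' := by
    rw [isum, Finset.sum_Ico_eq_sum_range, ← hN']
    exact Finset.sum_congr rfl fun k _ => rfl
  have hmono' : MonoOn (fun k => h (φ jj + k)) N' := fun i k hik hk =>
    hh (φ jj + i) (φ jj + k) (by omega) (by omega)
  have he0 : (fun k => h (φ jj + k)) 0 = g jj := by
    simpa using hgh jj (by omega)
  have heN : (fun k => h (φ jj + k)) N' = g (jj+1) := by
    have : φ jj + N' = φ (jj+1) := by omega
    simp only [this]
    exact hgh (jj+1) hjn
  have hB := stepA hω hθ hC hδ N' (fun k => h (φ jj + k)) hmono'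
    (le_trans hh0 (hh 0 (φ jj) (Nat.zero_le _) (le_trans hφj hφjm)))
    (le_trans (hh (φ jj + N') m (by omega) le_rfl) hhT)
  beta_reduce at he0 heN
  rw [he0, heN] at hB
  rw [hblock]
  refine le_trans hB ?_
  have hgj0 : 0 ≤ g jj := (hgh jj (by omega)) ▸
    (le_trans hh0 (hh 0 (φ jj) (Nat.zero_le _) (le_trans hφj hφjm)))
  have hgjT : g (jj+1) ≤ T := (hgh (jj+1) hjn) ▸
    (le_trans (hh (φ (jj+1)) m hφjm le_rfl) hhT)
  have hgmono : g jj ≤ g (jj+1) :=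
    (hgh jj (by omega)) ▸ (hgh (jj+1) hjn) ▸ hh (φ jj) (φ (jj+1)) hφj hφjm
  have hωnn : 0 ≤ ω (g jj) (g (jj+1)) ^ θ :=
    Real.rpow_nonneg (hω.nn _ _ hgj0 hgmono hgjT) θ
  calc C * 2^θ * ω (g jj) (g (jj+1)) ^ θ * PS θ N'
      ≤ C * 2^θ * ω (g jj) (g (jj+1)) ^ θ * (∑' k : ℕ, ((k:ℝ)^θ)⁻¹) := by
        refine mul_le_mul_of_nonneg_left (PS_le hθ N') ?_
        exact mul_nonneg (mul_nonneg hC (Real.rpow_nonneg (by norm_num) θ)) hωnn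
    _ = C * 2^θ * (∑' k : ℕ, ((k:ℝ)^θ)⁻¹) * ω (g jj) (g (jj+1)) ^ θ := by ring

lemma merge (hω : Ctl T ω) (hθ : 1 < θ) (hC : 0 ≤ C)
    (hδ : ∀ s u t : ℝ, 0 ≤ s → s ≤ u → u ≤ t → t ≤ T → ‖f s t - f s u - f u t‖ ≤ C * ω s t ^ θ)
    {s t : ℝ} (hs : 0 ≤ s) (htT : t ≤ T)
    (g₁ : ℕ → ℝ) (n₁ : ℕ) (g₂ : ℕ → ℝ) (n₂ : ℕ)
    (hm₁ : MonoOn g₁ n₁) (h10 : g₁ 0 = s) (h1n : g₁ n₁ = t)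
    (hm₂ : MonoOn g₂ n₂) (h20 : g₂ 0 = s) (h2n : g₂ n₂ = t) :
    ‖isum f g₁ n₁ - isum f g₂ n₂‖ ≤ (C * 2^θ * (∑' k : ℕ, ((k:ℝ)^θ)⁻¹)) *
      (∑ j ∈ Finset.range n₁, ω (g₁ j) (g₁ (j+1)) ^ θ
        + ∑ j ∈ Finset.range n₂, ω (g₂ j) (g₂ (j+1)) ^ θ) := by
  classical
  set F : Finset ℝ := ((Finset.range (n₁+1)).image g₁) ∪ ((Finset.range (n₂+1)).image g₂)
    with hF
  have hsF : s ∈ F := by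
    apply Finset.mem_union_left
    exact Finset.mem_image.2 ⟨0, Finset.mem_range.2 (by omega), h10⟩
  have htF : t ∈ F := by
    apply Finset.mem_union_left
    exact Finset.mem_image.2 ⟨n₁, Finset.mem_range.2 (by omega), h1n⟩
  have hFst : ∀ x ∈ F, s ≤ x ∧ x ≤ t := by
    intro x hx
    rcases Finset.mem_union.1 hx with hx | hx <;> obtain ⟨j, hj, rfl⟩ := Finset.mem_image.1 hx
    · have hj' := Finset.mem_range.1 hj
      exact ⟨h10 ▸ hm₁ 0 j (Nat.zero_le _) (by omega), h1n ▸ hm₁ j n₁ (by omega) le_rfl⟩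
    · have hj' := Finset.mem_range.1 hj
      exact ⟨h20 ▸ hm₂ 0 j (Nat.zero_le _) (by omega), h2n ▸ hm₂ j n₂ (by omega) le_rfl⟩
  set l : List ℝ := F.sort (· ≤ ·) with hl
  have hlen0 : 0 < l.length := by
    rw [hl, Finset.length_sort]
    exact Finset.card_pos.2 ⟨s, hsF⟩
  have hnodup : l.Nodup := F.sort_nodup _
  have hsorted : l.Pairwise (· < ·) := (Finset.sortedLT_sort F).pairwise
  have hgetmono : StrictMono l.get := hsorted.sortedLT.strictMono_get
  have hmeml : ∀ x, x ∈ l ↔ x ∈ F := fun x => F.mem_sort _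
  set m : ℕ := l.length - 1 with hm
  set h : ℕ → ℝ := fun k => l.getD k 0 with hhdef
  have hget : ∀ (k : ℕ) (hk : k < l.length), h k = l.get ⟨k, hk⟩ := fun k hk =>
    List.getD_eq_get l 0 ⟨k, hk⟩
  have hhF : ∀ k, k < l.length → h k ∈ F := by
    intro k hk
    rw [hget k hk]
    exact (hmeml _).1 (l.get_mem _)
  have hhmono : MonoOn h m := by
    intro i j hij hj
    have hjl : j < l.length := by omega
    have hil : i < l.length := by omega
    rw [hget i hil, hget j hjl]
    exact hgetmono.monotone (by exact_mod_cast hij)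
  -- index function
  have hidxlt : ∀ x ∈ F, l.idxOf x < l.length := fun x hx =>
    List.idxOf_lt_length_iff.2 ((hmeml x).2 hx)
  have hidxget : ∀ (x : ℝ) (hx : x ∈ F), l.get ⟨l.idxOf x, hidxlt x hx⟩ = x := fun x hx =>
    List.idxOf_get _
  have hinj : Function.Injective l.get := List.nodup_iff_injective_get.1 hnodup
  have hget0 : l.get ⟨0, hlen0⟩ = s := by
    have h1 : s ≤ l.get ⟨0, hlen0⟩ := (hFst _ ((hmeml _).1 (l.get_mem _))).1
    have h2 : l.get ⟨0, hlen0⟩ ≤ s := by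
      have := hgetmono.monotone (show (⟨0, hlen0⟩ : Fin l.length) ≤ ⟨l.idxOf s, hidxlt s hsF⟩
        from by simp)
      rwa [hidxget s hsF] at this
    linarith
  have hgetm : l.get ⟨m, by omega⟩ = t := by
    have h1 : l.get ⟨m, by omega⟩ ≤ t := (hFst _ ((hmeml _).1 (l.get_mem _))).2
    have h2 : t ≤ l.get ⟨m, by omega⟩ := by
      have := hgetmono.monotone (show (⟨l.idxOf t, hidxlt t htF⟩ : Fin l.length) ≤
        ⟨m, by omega⟩ from by simp only [Fin.mk_le_mk]; have := hidxlt t htF; omega)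
      rwa [hidxget t htF] at this
    linarith
  have hidx0 : l.idxOf s = 0 := by
    have := hinj (a₁ := ⟨l.idxOf s, hidxlt s hsF⟩) (a₂ := ⟨0, hlen0⟩)
      (by rw [hidxget s hsF, hget0])
    exact Fin.mk.inj_iff.1 this
  have hidxm : l.idxOf t = m := by
    have := hinj (a₁ := ⟨l.idxOf t, hidxlt t htF⟩) (a₂ := ⟨m, by omega⟩)
      (by rw [hidxget t htF, hgetm])
    exact Fin.mk.inj_iff.1 this
  have h0s : h 0 = s := by rw [hget 0 hlen0, hget0]
  have hmt : h m = t := by rw [hget m (by omega), hgetm]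
  -- generic refinement application
  have happly : ∀ (g : ℕ → ℝ) (n : ℕ), MonoOn g n → g 0 = s → g n = t →
      (∀ j, j ≤ n → g j ∈ F) →
      ‖isum f h m - isum f g n‖ ≤ (C * 2^θ * (∑' k : ℕ, ((k:ℝ)^θ)⁻¹)) *
        ∑ j ∈ Finset.range n, ω (g j) (g (j+1)) ^ θ := by
    intro g n hmono hg0 hgn hgF
    set φ : ℕ → ℕ := fun j => l.idxOf (g j) with hφ
    have hφval : ∀ j, j ≤ n → h (φ j) = g j := by
      intro j hj
      rw [hget (φ j) (hidxlt _ (hgF j hj))]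
      exact hidxget _ (hgF j hj)
    have hφmono : ∀ i j : ℕ, i ≤ j → j ≤ n → φ i ≤ φ j := by
      intro i j hij hj
      by_contra hcon
      push_neg at hcon
      have hlt := hgetmono (show (⟨φ j, hidxlt _ (hgF j hj)⟩ : Fin l.length) <
        ⟨φ i, hidxlt _ (hgF i (by omega))⟩ from by exact_mod_cast hcon)
      rw [hidxget _ (hgF j hj), hidxget _ (hgF i (by omega))] at hlt
      exact absurd (hmono i j hij hj) (not_le.2 hlt)
    have hφ0 : φ 0 = 0 := by rw [hφ]; simp only []; rw [hg0, hidx0]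
    have hφn : φ n = m := by rw [hφ]; simp only []; rw [hgn, hidxm]
    exact refine hω hθ hC hδ g n h m φ hφmono hφ0 hφn hφval hhmono
      (h0s ▸ hs) (hmt ▸ htT)
  have hap1 := happly g₁ n₁ hm₁ h10 h1n (fun j hj => Finset.mem_union_left _
    (Finset.mem_image.2 ⟨j, Finset.mem_range.2 (by omega), rfl⟩))
  have hap2 := happly g₂ n₂ hm₂ h20 h2n (fun j hj => Finset.mem_union_right _
    (Finset.mem_image.2 ⟨j, Finset.mem_range.2 (by omega), rfl⟩))
  calc ‖isum f g₁ n₁ - isum f g₂ n₂‖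
      ≤ ‖isum f h m - isum f g₁ n₁‖ + ‖isum f h m - isum f g₂ n₂‖ := by
        have : isum f g₁ n₁ - isum f g₂ n₂ =
            -(isum f h m - isum f g₁ n₁) + (isum f h m - isum f g₂ n₂) := by abel
        rw [this]
        exact le_trans (norm_add_le _ _) (by rw [norm_neg])
    _ ≤ _ := by
        rw [mul_add]
        exact add_le_add hap1 hap2

/-- uniform continuity of the control near the diagonal -/
lemma ucont (hcont : ContinuousOn (fun q : ℝ × ℝ => ω q.1 q.2)
      {q : ℝ × ℝ | 0 ≤ q.1 ∧ q.1 ≤ q.2 ∧ q.2 ≤ T})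
    (hω : Ctl T ω) {δ : ℝ} (hδ' : 0 < δ) :
    ∃ ρ > 0, ∀ u v : ℝ, 0 ≤ u → u ≤ v → v ≤ T → v - u ≤ ρ → ω u v ≤ δ := by
  set K : Set (ℝ × ℝ) := {q : ℝ × ℝ | 0 ≤ q.1 ∧ q.1 ≤ q.2 ∧ q.2 ≤ T} with hK
  have hKsub : K ⊆ (Icc 0 T) ×ˢ (Icc 0 T) := by
    rintro ⟨u, v⟩ ⟨h1, h2, h3⟩
    exact ⟨⟨h1, le_trans h2 h3⟩, ⟨le_trans h1 h2, h3⟩⟩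
  have hKclosed : IsClosed K := by
    have : K = {q : ℝ × ℝ | 0 ≤ q.1} ∩ ({q | q.1 ≤ q.2} ∩ {q | q.2 ≤ T}) := rfl
    rw [this]
    exact (isClosed_le continuous_const continuous_fst).inter
      ((isClosed_le continuous_fst continuous_snd).inter
        (isClosed_le continuous_snd continuous_const))
  have hKcomp : IsCompact K :=
    (isCompact_Icc.prod isCompact_Icc).of_isClosed_subset hKclosed hKsub
  have hucont := hKcomp.uniformContinuousOn_of_continuous hcont
  rw [Metric.uniformContinuousOn_iff] at hucont
  obtain ⟨ρ, hρ0, hρ⟩ := hucont δ hδ'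
  refine ⟨ρ/2, by linarith, fun u v hu huv hvT hd => ?_⟩
  have hmem1 : (u, v) ∈ K := ⟨hu, huv, hvT⟩
  have hmem2 : (u, u) ∈ K := ⟨hu, le_rfl, le_trans huv hvT⟩
  have hdist : dist ((u,v) : ℝ × ℝ) ((u,u) : ℝ × ℝ) < ρ := by
    rw [Prod.dist_eq]
    simp only [dist_self, Real.dist_eq]
    rw [abs_of_nonneg (by linarith : (0:ℝ) ≤ v - u),
      max_eq_right (by linarith : (0:ℝ) ≤ v - u)]
    linarith
  have := hρ (u,v) hmem1 (u,u) hmem2 hdist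
  simp only [Real.dist_eq] at this
  rw [hω.zero u hu (le_trans huv hvT), sub_zero] at this
  calc ω u v ≤ |ω u v| := le_abs_self _
    _ ≤ δ := le_of_lt this

/-- x ≤ δ implies x^θ ≤ δ^(θ-1) x -/
lemma rpow_interp (hθ : 1 < θ) {x δ : ℝ} (hx : 0 ≤ x) (hδ' : 0 ≤ δ) (hxδ : x ≤ δ) :
    x ^ θ ≤ δ ^ (θ - 1) * x := by
  rcases eq_or_lt_of_le hx with h | h
  · rw [← h, Real.zero_rpow (by positivity), mul_zero]
  · have : x ^ θ = x ^ (θ-1) * x := by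
      nth_rewrite 1 [show θ = (θ-1) + 1 by ring]
      rw [Real.rpow_add h, Real.rpow_one]
    rw [this]
    have := Real.rpow_le_rpow hx hxδ (by linarith : 0 ≤ θ - 1)
    exact mul_le_mul_of_nonneg_right this (le_of_lt h)

lemma exists_rsum [CompleteSpace V] (hω : Ctl T ω)
    (hcont : ContinuousOn (fun q : ℝ × ℝ => ω q.1 q.2)
      {q : ℝ × ℝ | 0 ≤ q.1 ∧ q.1 ≤ q.2 ∧ q.2 ≤ T})
    (hθ : 1 < θ) (hC : 0 ≤ C)
    (hδ : ∀ s u t : ℝ, 0 ≤ s → s ≤ u → u ≤ t → t ≤ T → ‖f s t - f s u - f u t‖ ≤ C * ω s t ^ θ)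
    {s t : ℝ} (hs : 0 ≤ s) (hst : s ≤ t) (htT : t ≤ T) :
    ∃ L : V, RSumLimit s t f L := by
  set Z : ℝ := ∑' k : ℕ, ((k:ℝ)^θ)⁻¹ with hZ
  set M : ℝ := C * 2^θ * Z with hM
  have hZ0 : 0 ≤ Z := tsum_nonneg fun k => by positivity
  have hM0 : 0 ≤ M := mul_nonneg (mul_nonneg hC (Real.rpow_nonneg (by norm_num) _)) hZ0
  have hωst : 0 ≤ ω s t := hω.nn s t hs hst htT
  have hts : 0 ≤ t - s := by linarith
  have hPmono : ∀ π : RPathPartition s t, MonoOn π.pts π.n := fun π i j hij _ => π.mono hij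
  have hP0 : ∀ π : RPathPartition s t, 0 ≤ π.pts 0 := fun π => by rw [π.first]; exact hs
  have hPT : ∀ π : RPathPartition s t, π.pts π.n ≤ T := fun π => by rw [π.last]; exact htT
  have hinc : ∀ (π : RPathPartition s t) (i : ℕ), i < π.n → π.pts (i+1) - π.pts i ≤ π.mesh := by
    intro π i hi
    have hbdd : BddAbove (Set.range fun j : Fin π.n => π.pts (j.1+1) - π.pts j.1) :=
      Set.Finite.bddAbove (Set.finite_range _)
    exact le_ciSup hbdd ⟨i, hi⟩
  have hdiff : ∀ π π' : RPathPartition s t,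
      ‖riemannSum π f - riemannSum π' f‖ ≤
        M * ((∑ j ∈ Finset.range π.n, ω (π.pts j) (π.pts (j+1)) ^ θ)
          + ∑ j ∈ Finset.range π'.n, ω (π'.pts j) (π'.pts (j+1)) ^ θ) := fun π π' =>
    merge hω hθ hC hδ hs htT π.pts π.n π'.pts π'.n (hPmono π) π.first π.last
      (hPmono π') π'.first π'.last
  have hAbound : ∀ δ' : ℝ, 0 < δ' → ∃ ρ > 0, ∀ π : RPathPartition s t, π.mesh ≤ ρ →
      (∑ j ∈ Finset.range π.n, ω (π.pts j) (π.pts (j+1)) ^ θ) ≤ δ'^(θ-1) * ω s t := by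
    intro δ' hδ'
    obtain ⟨ρ, hρ0, hρ⟩ := ucont hcont hω hδ'
    refine ⟨ρ, hρ0, fun π hπ => ?_⟩
    have hterm : ∀ j ∈ Finset.range π.n,
        ω (π.pts j) (π.pts (j+1)) ^ θ ≤ δ'^(θ-1) * ω (π.pts j) (π.pts (j+1)) := by
      intro j hj
      have hj' := Finset.mem_range.1 hj
      have h1 : 0 ≤ π.pts j := le_trans (hP0 π) (π.mono (Nat.zero_le j))
      have h2 : π.pts j ≤ π.pts (j+1) := π.mono (by omega)
      have h3 : π.pts (j+1) ≤ T := le_trans (π.mono (by omega : j+1 ≤ π.n)) (hPT π)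
      have h4 : ω (π.pts j) (π.pts (j+1)) ≤ δ' := hρ _ _ h1 h2 h3
        (le_trans (hinc π j hj') hπ)
      exact rpow_interp hθ (hω.nn _ _ h1 h2 h3) (le_of_lt hδ') h4
    have hchain : ∑ j ∈ Finset.range π.n, ω (π.pts j) (π.pts (j+1)) ≤ ω s t := by
      have := chain_sum hω π.pts (hP0 π) π.n (hPmono π) (hPT π)
      rwa [π.first, π.last] at this
    calc ∑ j ∈ Finset.range π.n, ω (π.pts j) (π.pts (j+1)) ^ θ
        ≤ ∑ j ∈ Finset.range π.n, δ'^(θ-1) * ω (π.pts j) (π.pts (j+1)) :=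
          Finset.sum_le_sum hterm
      _ = δ'^(θ-1) * ∑ j ∈ Finset.range π.n, ω (π.pts j) (π.pts (j+1)) := by
          rw [Finset.mul_sum]
      _ ≤ δ'^(θ-1) * ω s t := by
          exact mul_le_mul_of_nonneg_left hchain (Real.rpow_nonneg (le_of_lt hδ') _)
  have hcauchy : ∀ π : ℕ → RPathPartition s t, Tendsto (fun k => (π k).mesh) atTop (𝓝 0) →
      CauchySeq (fun k => riemannSum (π k) f) := by
    intro π hmesh
    rw [Metric.cauchySeq_iff]
    intro ε hε
    have hden : (0:ℝ) < 2*M*ω s t + 1 := by nlinarith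
    set c : ℝ := ε / (2*M*ω s t + 1) with hc
    have hc0 : 0 < c := div_pos hε hden
    have hmin0 : 0 < min c 1 := lt_min hc0 one_pos
    set δ' : ℝ := (min c 1)^((θ-1)⁻¹) with hδ'def
    have hδ'0 : 0 < δ' := Real.rpow_pos_of_pos hmin0 _
    have hδ'pow : δ'^(θ-1) = min c 1 := by
      rw [hδ'def, ← Real.rpow_mul (le_of_lt hmin0),
        inv_mul_cancel₀ (by linarith : θ-1 ≠ 0), Real.rpow_one]
    obtain ⟨ρ, hρ0, hρ⟩ := hAbound δ' hδ'0
    obtain ⟨N, hN⟩ := (Metric.tendsto_atTop.1 hmesh) ρ hρ0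
    refine ⟨N, fun m hm k hk => ?_⟩
    have hmesh_le : ∀ i, N ≤ i → (π i).mesh ≤ ρ := by
      intro i hi
      have := hN i hi
      rw [Real.dist_eq, sub_zero] at this
      exact le_of_lt (lt_of_abs_lt this)
    have hAm := hρ (π m) (hmesh_le m hm)
    have hAk := hρ (π k) (hmesh_le k hk)
    rw [dist_eq_norm]
    refine lt_of_le_of_lt (hdiff (π m) (π k)) ?_
    have h1 : M * ((∑ j ∈ Finset.range (π m).n, ω ((π m).pts j) ((π m).pts (j+1)) ^ θ)
        + ∑ j ∈ Finset.range (π k).n, ω ((π k).pts j) ((π k).pts (j+1)) ^ θ) ≤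
        M * (2 * ((min c 1) * ω s t)) := by
      refine mul_le_mul_of_nonneg_left ?_ hM0
      rw [← hδ'pow]
      linarith
    refine lt_of_le_of_lt h1 ?_
    have hmc : min c 1 ≤ c := min_le_left _ _
    have h2 : M * (2 * ((min c 1) * ω s t)) ≤ 2*M*ω s t * c := by
      have h3 : M*ω s t*(min c 1) ≤ M*ω s t*c :=
        mul_le_mul_of_nonneg_left hmc (mul_nonneg hM0 hωst)
      nlinarith [h3]
    refine lt_of_le_of_lt h2 ?_
    rw [hc]
    rw [div_eq_mul_inv, ← mul_assoc]
    calc 2*M*ω s t * ε * (2*M*ω s t + 1)⁻¹ < (2*M*ω s t + 1) * ε * (2*M*ω s t + 1)⁻¹ := by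
          have : (0:ℝ) < (2*M*ω s t + 1)⁻¹ := by positivity
          nlinarith
      _ = ε := by field_simp
  -- the uniform partitions
  have hNpos : ∀ N : ℕ, (0:ℝ) < (N:ℝ)+1 := fun N => by positivity
  set U : ℕ → RPathPartition s t := fun N =>
    { n := N+1
      pts := fun j => s + (min j (N+1) : ℕ) * (t-s) / ((N:ℝ)+1)
      mono := by
        intro j k hjk
        have hmm : ((min j (N+1) : ℕ):ℝ) ≤ ((min k (N+1) : ℕ):ℝ) := by
          exact_mod_cast min_le_min hjk le_rfl
        show s + ((min j (N+1) : ℕ):ℝ) * (t-s) / ((N:ℝ)+1)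
          ≤ s + ((min k (N+1) : ℕ):ℝ) * (t-s) / ((N:ℝ)+1)
        rw [div_eq_mul_inv, div_eq_mul_inv]
        refine add_le_add_right (mul_le_mul_of_nonneg_right ?_ (by positivity)) s
        exact mul_le_mul_of_nonneg_right hmm hts
      first := by simp
      last := by
        simp only [min_self]
        have hne : ((N:ℝ)+1) ≠ 0 := by positivity
        push_cast
        rw [mul_div_cancel_left₀ (t-s) hne]
        ring } with hU
  have hUmesh : ∀ N, (U N).mesh = (t-s)/((N:ℝ)+1) := by
    intro N
    have hval : (fun i : Fin (U N).n => (U N).pts (i.1+1) - (U N).pts i.1) =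
        fun _ => (t-s)/((N:ℝ)+1) := by
      funext i
      have hi : i.1 < N+1 := i.2
      show (s + (min (i.1+1) (N+1) : ℕ) * (t-s) / ((N:ℝ)+1))
        - (s + (min i.1 (N+1) : ℕ) * (t-s) / ((N:ℝ)+1)) = (t-s)/((N:ℝ)+1)
      rw [Nat.min_eq_left (by omega), Nat.min_eq_left (by omega)]
      push_cast
      ring
    rw [RPathPartition.mesh, hval, ciSup_const]
  have hUtend : Tendsto (fun N => (U N).mesh) atTop (𝓝 0) := by
    simp only [hUmesh]
    have h1 : Tendsto (fun N : ℕ => (t-s) * (1/((N:ℝ)+1))) atTop (𝓝 ((t-s) * 0)) :=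
      tendsto_one_div_add_atTop_nhds_zero_nat.const_mul (t-s)
    rw [mul_zero] at h1
    refine h1.congr fun N => ?_
    field_simp
  obtain ⟨L, hL⟩ := cauchySeq_tendsto_of_complete (hcauchy U hUtend)
  refine ⟨L, fun σ hσ => ?_⟩
  set τ : ℕ → RPathPartition s t := fun k => if k % 2 = 0 then U (k/2) else σ (k/2) with hτ
  have hτmesh : Tendsto (fun k => (τ k).mesh) atTop (𝓝 0) := by
    rw [Metric.tendsto_atTop]
    intro ε hε
    obtain ⟨N1, h1⟩ := Metric.tendsto_atTop.1 hUtend ε hε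
    obtain ⟨N2, h2⟩ := Metric.tendsto_atTop.1 hσ ε hε
    refine ⟨2*(max N1 N2)+2, fun k hk => ?_⟩
    by_cases h : k % 2 = 0
    · have : τ k = U (k/2) := by rw [hτ]; simp [h]
      rw [this]
      exact h1 (k/2) (by omega)
    · have : τ k = σ (k/2) := by rw [hτ]; simp [h]
      rw [this]
      exact h2 (k/2) (by omega)
  obtain ⟨L', hL'⟩ := cauchySeq_tendsto_of_complete (hcauchy τ hτmesh)
  have h2k : Tendsto (fun k : ℕ => 2*k) atTop atTop :=
    tendsto_atTop_mono (fun k => by simp only [id_eq]; omega) tendsto_id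
  have h2k1 : Tendsto (fun k : ℕ => 2*k+1) atTop atTop :=
    tendsto_atTop_mono (fun k => by simp only [id_eq]; omega) tendsto_id
  have heven : Tendsto (fun k => riemannSum (τ (2*k)) f) atTop (𝓝 L') := hL'.comp h2k
  have hodd : Tendsto (fun k => riemannSum (τ (2*k+1)) f) atTop (𝓝 L') := hL'.comp h2k1
  have heq1 : (fun k => riemannSum (τ (2*k)) f) = fun k => riemannSum (U k) f := by
    funext k
    have : τ (2*k) = U k := by
      rw [hτ]
      simp only [show (2*k) % 2 = 0 from by omega, if_true]
      congr 1
      omega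
    rw [this]
  have heq2 : (fun k => riemannSum (τ (2*k+1)) f) = fun k => riemannSum (σ k) f := by
    funext k
    have : τ (2*k+1) = σ k := by
      rw [hτ]
      simp only [show (2*k+1) % 2 = 1 from by omega]
      norm_num
      congr 1
      omega
    rw [this]
  rw [heq1] at heven
  rw [heq2] at hodd
  have hLL' : L' = L := tendsto_nhds_unique heven hL
  rwa [hLL'] at hodd

lemma abs_sum_le {n : ℕ} (F : Fin n → ℝ) {K : ℝ} (h : ∀ i, |F i| ≤ K) :
    |∑ i, F i| ≤ n * K := by
  calc |∑ i, F i| ≤ ∑ i, |F i| := Finset.abs_sum_le_sum_abs _ _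
    _ ≤ ∑ _i : Fin n, K := Finset.sum_le_sum fun i _ => h i
    _ = n * K := by rw [Finset.sum_const, Finset.card_univ, Fintype.card_fin, nsmul_eq_mul]

lemma rpow_split (hω : Ctl T ω) {a b : ℝ} (ha : 0 < a) (hb : 0 < b)
    {s u t : ℝ} (hs : 0 ≤ s) (hsu : s ≤ u) (hut : u ≤ t) (htT : t ≤ T) :
    ω s u ^ a * ω u t ^ b ≤ ω s t ^ (a+b) := by
  have h1 : ω s u ≤ ω s t := hω.mono hs le_rfl hsu hut htT
  have h2 : ω u t ≤ ω s t := hω.mono hs hsu hut le_rfl htT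
  have hsu0 : 0 ≤ ω s u := hω.nn s u hs hsu (le_trans hut htT)
  have hut0 : 0 ≤ ω u t := hω.nn u t (le_trans hs hsu) hut htT
  have hst0 : 0 ≤ ω s t := hω.nn s t hs (le_trans hsu hut) htT
  rcases eq_or_lt_of_le hst0 with h0 | h0
  · have e1 : ω s u = 0 := le_antisymm (h1.trans h0.symm.le) hsu0
    rw [e1, Real.zero_rpow (ne_of_gt ha), zero_mul, ← h0,
      Real.zero_rpow (by positivity : a + b ≠ 0)]
  · calc ω s u ^ a * ω u t ^ b ≤ ω s t ^ a * ω s t ^ b :=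
        mul_le_mul (Real.rpow_le_rpow hsu0 h1 ha.le) (Real.rpow_le_rpow hut0 h2 hb.le)
          (Real.rpow_nonneg hut0 b) (Real.rpow_nonneg hst0 a)
      _ = ω s t ^ (a+b) := (Real.rpow_add h0 a b).symm

lemma young_delta {d e : ℕ} (hω : Ctl T ω) {p : ℝ} (hp : 0 < p)
    (H' : ℝ → Fin d → Fin e → Fin d → ℝ) (D : ℝ → ℝ → Fin d → Fin d → ℝ)
    {CH' CD : ℝ} (hCH' : 0 ≤ CH') (hCD : 0 ≤ CD)
    (hH'b : ∀ s t : ℝ, 0 ≤ s → s ≤ t → t ≤ T → ‖H' t - H' s‖ ≤ CH' * ω s t ^ (1/p))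
    (hDb : ∀ s t : ℝ, 0 ≤ s → s ≤ t → t ≤ T → ∀ α β, |D s t α β| ≤ CD * ω s t ^ (2/p))
    (hDadd : ∀ s u t : ℝ, 0 ≤ s → s ≤ u → u ≤ t → t ≤ T → ∀ α β,
      D s t α β = D s u α β + D u t α β) :
    ∀ s u t : ℝ, 0 ≤ s → s ≤ u → u ≤ t → t ≤ T →
      ‖(fun k : Fin e => ∑ α, ∑ β, H' s α k β * D s t α β)
        - (fun k : Fin e => ∑ α, ∑ β, H' s α k β * D s u α β)
        - (fun k : Fin e => ∑ α, ∑ β, H' u α k β * D u t α β)‖ ≤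
        ((d:ℝ)^2 * CH' * CD) * ω s t ^ (3/p) := by
  intro s u t h0 h1 h2 h3
  have hst0 : 0 ≤ ω s t := hω.nn s t h0 (h1.trans h2) h3
  have hRHS0 : 0 ≤ ((d:ℝ)^2 * CH' * CD) * ω s t ^ (3/p) :=
    mul_nonneg (mul_nonneg (mul_nonneg (by positivity) hCH') hCD)
      (Real.rpow_nonneg hst0 _)
  rw [pi_norm_le_iff_of_nonneg hRHS0]
  intro k
  simp only [Pi.sub_apply]
  have hid : ∑ α, ∑ β, H' s α k β * D s t α β - ∑ α, ∑ β, H' s α k β * D s u α β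
      - ∑ α, ∑ β, H' u α k β * D u t α β
      = ∑ α, ∑ β, (H' s α k β - H' u α k β) * D u t α β := by
    rw [← Finset.sum_sub_distrib, ← Finset.sum_sub_distrib]
    refine Finset.sum_congr rfl fun α _ => ?_
    rw [← Finset.sum_sub_distrib, ← Finset.sum_sub_distrib]
    refine Finset.sum_congr rfl fun β _ => ?_
    rw [hDadd s u t h0 h1 h2 h3 α β]; ring
  rw [Real.norm_eq_abs, hid]
  have hK : ∀ α β, |(H' s α k β - H' u α k β) * D u t α β| ≤
      (CH' * ω s u ^ (1/p)) * (CD * ω u t ^ (2/p)) := by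
    intro α β
    rw [abs_mul]
    have ha : |H' s α k β - H' u α k β| ≤ CH' * ω s u ^ (1/p) := by
      have hcomp : (H' u - H' s) α k β = H' u α k β - H' s α k β := rfl
      have hb := hH'b s u h0 h1 (h2.trans h3)
      calc |H' s α k β - H' u α k β| = |(H' u - H' s) α k β| := by
            rw [hcomp, abs_sub_comm]
        _ ≤ ‖(H' u - H' s) α k‖ := by
            rw [← Real.norm_eq_abs]; exact norm_le_pi_norm _ β
        _ ≤ ‖(H' u - H' s) α‖ := norm_le_pi_norm _ k
        _ ≤ ‖H' u - H' s‖ := norm_le_pi_norm _ α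
        _ ≤ CH' * ω s u ^ (1/p) := hb
    have hbD : |D u t α β| ≤ CD * ω u t ^ (2/p) :=
      hDb u t (h0.trans h1) h2 h3 α β
    exact mul_le_mul ha hbD (abs_nonneg _)
      (mul_nonneg hCH' (Real.rpow_nonneg (hω.nn s u h0 h1 (h2.trans h3)) _))
  have houter : ∀ α, |∑ β, (H' s α k β - H' u α k β) * D u t α β| ≤
      (d:ℝ) * ((CH' * ω s u ^ (1/p)) * (CD * ω u t ^ (2/p))) := fun α =>
    abs_sum_le _ (hK α)
  have htot := abs_sum_le (fun α => ∑ β, (H' s α k β - H' u α k β) * D u t α β) houter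
  refine le_trans htot ?_
  have hsplit := rpow_split hω (by positivity : (0:ℝ) < 1/p) (by positivity : (0:ℝ) < 2/p)
    h0 h1 h2 h3
  rw [show (1/p) + (2/p) = 3/p by ring] at hsplit
  calc (d:ℝ) * ((d:ℝ) * ((CH' * ω s u ^ (1/p)) * (CD * ω u t ^ (2/p))))
      = ((d:ℝ)^2 * CH' * CD) * (ω s u ^ (1/p) * ω u t ^ (2/p)) := by ring
    _ ≤ ((d:ℝ)^2 * CH' * CD) * ω s t ^ (3/p) :=
        mul_le_mul_of_nonneg_left hsplit
          (mul_nonneg (mul_nonneg (by positivity) hCH') hCD)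

lemma rough_delta {d e : ℕ} (hω : Ctl T ω) {p : ℝ} (hp : 0 < p)
    (X : ℝ → Fin d → ℝ) (XX : ℝ → ℝ → Fin d → Fin d → ℝ)
    (H : ℝ → Fin e → Fin d → ℝ) (H' : ℝ → Fin d → Fin e → Fin d → ℝ)
    {CX CXX CH' CR : ℝ} (hCX : 0 ≤ CX) (hCXX : 0 ≤ CXX) (hCH' : 0 ≤ CH') (hCR : 0 ≤ CR)
    (hXb : ∀ s t : ℝ, 0 ≤ s → s ≤ t → t ≤ T → ‖X t - X s‖ ≤ CX * ω s t ^ (1/p))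
    (hXXb : ∀ s t : ℝ, 0 ≤ s → s ≤ t → t ≤ T → ‖XX s t‖ ≤ CXX * ω s t ^ (2/p))
    (hChen : ∀ s u t : ℝ, 0 ≤ s → s ≤ u → u ≤ t → t ≤ T → ∀ α β,
      XX s t α β = XX s u α β + (X u α - X s α) * (X t β - X u β) + XX u t α β)
    (hH'b : ∀ s t : ℝ, 0 ≤ s → s ≤ t → t ≤ T → ‖H' t - H' s‖ ≤ CH' * ω s t ^ (1/p))
    (hRb : ∀ s t : ℝ, 0 ≤ s → s ≤ t → t ≤ T →
      ‖H t - H s - ∑ γ, (X t γ - X s γ) • H' s γ‖ ≤ CR * ω s t ^ (2/p)) :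
    ∀ s u t : ℝ, 0 ≤ s → s ≤ u → u ≤ t → t ≤ T →
      ‖roughSummand X XX H H' s t - roughSummand X XX H H' s u
        - roughSummand X XX H H' u t‖ ≤
        ((d:ℝ) * CR * CX + (d:ℝ)^2 * CH' * CXX) * ω s t ^ (3/p) := by
  intro s u t h0 h1 h2 h3
  have hst0 : 0 ≤ ω s t := hω.nn s t h0 (h1.trans h2) h3
  have hsu0 : 0 ≤ ω s u := hω.nn s u h0 h1 (h2.trans h3)
  have hut0 : 0 ≤ ω u t := hω.nn u t (h0.trans h1) h2 h3
  have hRHS0 : 0 ≤ ((d:ℝ) * CR * CX + (d:ℝ)^2 * CH' * CXX) * ω s t ^ (3/p) :=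
    mul_nonneg (add_nonneg (mul_nonneg (mul_nonneg (by positivity) hCR) hCX)
      (mul_nonneg (mul_nonneg (by positivity) hCH') hCXX)) (Real.rpow_nonneg hst0 _)
  rw [pi_norm_le_iff_of_nonneg hRHS0]
  intro k
  simp only [Pi.sub_apply]
  have hch := hChen s u t h0 h1 h2 h3
  -- the algebraic identity
  have hid : roughSummand X XX H H' s t k - roughSummand X XX H H' s u k
      - roughSummand X XX H H' u t k
      = (∑ β, (-(H u k β - H s k β - ∑ α, (X u α - X s α) * H' s α k β)) * (X t β - X u β))
        + ∑ α, ∑ β, (H' s α k β - H' u α k β) * XX u t α β := by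
    simp only [roughSummand]
    have hexp : ∑ α, ∑ β, H' s α k β * XX s t α β
        = ∑ α, ∑ β, H' s α k β * XX s u α β
          + (∑ α, ∑ β, H' s α k β * ((X u α - X s α) * (X t β - X u β))
            + ∑ α, ∑ β, H' s α k β * XX u t α β) := by
      rw [← Finset.sum_add_distrib, ← Finset.sum_add_distrib]
      refine Finset.sum_congr rfl fun α _ => ?_
      rw [← Finset.sum_add_distrib, ← Finset.sum_add_distrib]
      refine Finset.sum_congr rfl fun β _ => ?_
      rw [hch α β]; ring
    rw [hexp]
    have hcross : ∑ α, ∑ β, H' s α k β * ((X u α - X s α) * (X t β - X u β))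
        = ∑ β, (∑ α, (X u α - X s α) * H' s α k β) * (X t β - X u β) := by
      rw [Finset.sum_comm]
      refine Finset.sum_congr rfl fun β _ => ?_
      rw [Finset.sum_mul]
      exact Finset.sum_congr rfl fun α _ => by ring
    rw [hcross]
    have hsingle : ∑ γ, H s k γ * (X t γ - X s γ) - ∑ γ, H s k γ * (X u γ - X s γ)
        - ∑ γ, H u k γ * (X t γ - X u γ) = ∑ γ, (H s k γ - H u k γ) * (X t γ - X u γ) := by
      rw [← Finset.sum_sub_distrib, ← Finset.sum_sub_distrib]
      exact Finset.sum_congr rfl fun γ _ => by ring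
    have hdouble : ∑ α, ∑ β, H' s α k β * XX u t α β - ∑ α, ∑ β, H' u α k β * XX u t α β
        = ∑ α, ∑ β, (H' s α k β - H' u α k β) * XX u t α β := by
      rw [← Finset.sum_sub_distrib]
      refine Finset.sum_congr rfl fun α _ => ?_
      rw [← Finset.sum_sub_distrib]
      exact Finset.sum_congr rfl fun β _ => by ring
    have hneg : ∑ β, (-(H u k β - H s k β - ∑ α, (X u α - X s α) * H' s α k β))
          * (X t β - X u β)
        = ∑ β, (H s k β - H u k β) * (X t β - X u β)
          + ∑ β, (∑ α, (X u α - X s α) * H' s α k β) * (X t β - X u β) := by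
      rw [← Finset.sum_add_distrib]
      exact Finset.sum_congr rfl fun β _ => by ring
    rw [hneg, ← hsingle, ← hdouble]
    ring
  rw [Real.norm_eq_abs, hid]
  -- remainder bound
  have hRem : ∀ β, |H u k β - H s k β - ∑ α, (X u α - X s α) * H' s α k β| ≤
      CR * ω s u ^ (2/p) := by
    intro β
    have hb := hRb s u h0 h1 (h2.trans h3)
    have hcomp : (H u - H s - ∑ γ, (X u γ - X s γ) • H' s γ) k β
        = H u k β - H s k β - ∑ α, (X u α - X s α) * H' s α k β := by
      simp [Finset.sum_apply, Pi.smul_apply, smul_eq_mul]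
    calc |H u k β - H s k β - ∑ α, (X u α - X s α) * H' s α k β|
        = |(H u - H s - ∑ γ, (X u γ - X s γ) • H' s γ) k β| := by rw [hcomp]
      _ ≤ ‖(H u - H s - ∑ γ, (X u γ - X s γ) • H' s γ) k‖ := by
          rw [← Real.norm_eq_abs]; exact norm_le_pi_norm _ β
      _ ≤ ‖H u - H s - ∑ γ, (X u γ - X s γ) • H' s γ‖ := norm_le_pi_norm _ k
      _ ≤ CR * ω s u ^ (2/p) := hb
  have hXut : ∀ β, |X t β - X u β| ≤ CX * ω u t ^ (1/p) := by
    intro β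
    have hb := hXb u t (h0.trans h1) h2 h3
    calc |X t β - X u β| = |(X t - X u) β| := rfl
      _ ≤ ‖X t - X u‖ := by rw [← Real.norm_eq_abs]; exact norm_le_pi_norm _ β
      _ ≤ CX * ω u t ^ (1/p) := hb
  have hb1 : |∑ β, (-(H u k β - H s k β - ∑ α, (X u α - X s α) * H' s α k β))
        * (X t β - X u β)| ≤
      (d:ℝ) * ((CR * ω s u ^ (2/p)) * (CX * ω u t ^ (1/p))) := by
    refine abs_sum_le _ fun β => ?_
    rw [abs_mul, abs_neg]
    exact mul_le_mul (hRem β) (hXut β) (abs_nonneg _)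
      (mul_nonneg hCR (Real.rpow_nonneg hsu0 _))
  have hXXut : ∀ α β, |XX u t α β| ≤ CXX * ω u t ^ (2/p) := by
    intro α β
    have hb := hXXb u t (h0.trans h1) h2 h3
    calc |XX u t α β| ≤ ‖XX u t α‖ := by rw [← Real.norm_eq_abs]; exact norm_le_pi_norm _ β
      _ ≤ ‖XX u t‖ := norm_le_pi_norm _ α
      _ ≤ CXX * ω u t ^ (2/p) := hb
  have hH'su : ∀ α β, |H' s α k β - H' u α k β| ≤ CH' * ω s u ^ (1/p) := by
    intro α β
    have hb := hH'b s u h0 h1 (h2.trans h3)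
    calc |H' s α k β - H' u α k β| = |(H' u - H' s) α k β| := by
          rw [show (H' u - H' s) α k β = H' u α k β - H' s α k β from rfl, abs_sub_comm]
      _ ≤ ‖(H' u - H' s) α k‖ := by rw [← Real.norm_eq_abs]; exact norm_le_pi_norm _ β
      _ ≤ ‖(H' u - H' s) α‖ := norm_le_pi_norm _ k
      _ ≤ ‖H' u - H' s‖ := norm_le_pi_norm _ α
      _ ≤ CH' * ω s u ^ (1/p) := hb
  have hb2 : |∑ α, ∑ β, (H' s α k β - H' u α k β) * XX u t α β| ≤
      (d:ℝ) * ((d:ℝ) * ((CH' * ω s u ^ (1/p)) * (CXX * ω u t ^ (2/p)))) := by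
    refine abs_sum_le _ fun α => ?_
    refine abs_sum_le _ fun β => ?_
    rw [abs_mul]
    exact mul_le_mul (hH'su α β) (hXXut α β) (abs_nonneg _)
      (mul_nonneg hCH' (Real.rpow_nonneg hsu0 _))
  have hsplit1 := rpow_split hω (by positivity : (0:ℝ) < 2/p) (by positivity : (0:ℝ) < 1/p)
    h0 h1 h2 h3
  rw [show (2/p) + (1/p) = 3/p by ring] at hsplit1
  have hsplit2 := rpow_split hω (by positivity : (0:ℝ) < 1/p) (by positivity : (0:ℝ) < 2/p)
    h0 h1 h2 h3
  rw [show (1/p) + (2/p) = 3/p by ring] at hsplit2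
  calc |_ + _| ≤ _ := abs_add_le _ _
    _ ≤ (d:ℝ) * ((CR * ω s u ^ (2/p)) * (CX * ω u t ^ (1/p)))
        + (d:ℝ) * ((d:ℝ) * ((CH' * ω s u ^ (1/p)) * (CXX * ω u t ^ (2/p)))) :=
        add_le_add hb1 hb2
    _ = ((d:ℝ) * CR * CX) * (ω s u ^ (2/p) * ω u t ^ (1/p))
        + ((d:ℝ)^2 * CH' * CXX) * (ω s u ^ (1/p) * ω u t ^ (2/p)) := by ring
    _ ≤ ((d:ℝ) * CR * CX) * ω s t ^ (3/p)
        + ((d:ℝ)^2 * CH' * CXX) * ω s t ^ (3/p) := by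
        refine add_le_add
          (mul_le_mul_of_nonneg_left hsplit1
            (mul_nonneg (mul_nonneg (by positivity) hCR) hCX))
          (mul_le_mul_of_nonneg_left hsplit2
            (mul_nonneg (mul_nonneg (by positivity) hCH') hCXX))
    _ = ((d:ℝ) * CR * CX + (d:ℝ)^2 * CH' * CXX) * ω s t ^ (3/p) := by ring

lemma rsl_add {W : Type*} [NormedAddCommGroup W] {s t : ℝ} {f g : ℝ → ℝ → W}
    {L L' : W} (hf : RSumLimit s t f L) (hg : RSumLimit s t g L') :
    RSumLimit s t (fun u v => f u v + g u v) (L + L') := by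
  intro π hπ
  have h1 := hf π hπ
  have h2 := hg π hπ
  have heq : ∀ n, riemannSum (π n) (fun u v => f u v + g u v)
      = riemannSum (π n) f + riemannSum (π n) g := fun n => Finset.sum_add_distrib
  exact (h1.add h2).congr fun n => (heq n).symm

lemma rsl_smul {W : Type*} [NormedAddCommGroup W] [NormedSpace ℝ W] {s t : ℝ}
    {f : ℝ → ℝ → W} {L : W} (c : ℝ) (hf : RSumLimit s t f L) :
    RSumLimit s t (fun u v => c • f u v) (c • L) := by
  intro π hπ
  have h1 := hf π hπ
  have heq : ∀ n, riemannSum (π n) (fun u v => c • f u v)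
      = c • riemannSum (π n) f := fun n => (Finset.smul_sum).symm
  exact (h1.const_smul c).congr fun n => (heq n).symm

lemma rsl_congr {W : Type*} [NormedAddCommGroup W] {s t : ℝ} {f g : ℝ → ℝ → W}
    {L : W} (h : f = g) (hf : RSumLimit s t f L) : RSumLimit s t g L := h ▸ hf

end Sew

/-- Rough integrals against two rough paths with common trace differ by a
Young integral of the Gubinelli derivative against `D = 𝕏₂ − 𝕏₁`; in particular the
geometrisation correction is `½ ∫ H' d[𝐗₁]`. -/
theorem statement17 (T p : ℝ) (hT : 0 ≤ T) (hp1 : 1 ≤ p) (hp3 : p < 3) (d e : ℕ)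
    (ω : ℝ → ℝ → ℝ) (hω : IsControl T ω)
    (X : ℝ → Fin d → ℝ) (XX₁ XX₂ : ℝ → ℝ → Fin d → Fin d → ℝ)
    (hX₁ : IsRoughPath T p ω X XX₁) (hX₂ : IsRoughPath T p ω X XX₂)
    (H : ℝ → Fin e → Fin d → ℝ) (H' : ℝ → Fin d → Fin e → Fin d → ℝ)
    (hH : IsControlledPath T p ω X H H') :
    (∀ s u t : ℝ, 0 ≤ s → s ≤ u → u ≤ t → t ≤ T → ∀ α β : Fin d,
      XX₂ s t α β - XX₁ s t α β =
        (XX₂ s u α β - XX₁ s u α β) + (XX₂ u t α β - XX₁ u t α β)) ∧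
    (∃ C : ℝ, ∀ s t : ℝ, 0 ≤ s → s ≤ t → t ≤ T →
      ‖(fun (α β : Fin d) => XX₂ s t α β - XX₁ s t α β)‖ ≤ C * ω s t ^ (2 / p)) ∧
    ∃ I₁ I₂ J Ig Jb : ℝ → ℝ → Fin e → ℝ,
      (∀ s t : ℝ, 0 ≤ s → s ≤ t → t ≤ T →
        RSumLimit s t (roughSummand X XX₁ H H') (I₁ s t)) ∧
      (∀ s t : ℝ, 0 ≤ s → s ≤ t → t ≤ T →
        RSumLimit s t (roughSummand X XX₂ H H') (I₂ s t)) ∧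
      (∀ s t : ℝ, 0 ≤ s → s ≤ t → t ≤ T →
        RSumLimit s t (fun (u v : ℝ) (k : Fin e) =>
          ∑ α, ∑ β, H' u α k β * (XX₂ u v α β - XX₁ u v α β)) (J s t)) ∧
      (∀ s t : ℝ, 0 ≤ s → s ≤ t → t ≤ T → I₂ s t = I₁ s t + J s t) ∧
      (∀ s t : ℝ, 0 ≤ s → s ≤ t → t ≤ T →
        RSumLimit s t (roughSummand X
          (fun u v α β => (XX₁ u v α β - XX₁ u v β α) / 2 +
            (X v α - X u α) * (X v β - X u β) / 2) H H') (Ig s t)) ∧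
      (∀ s t : ℝ, 0 ≤ s → s ≤ t → t ≤ T →
        RSumLimit s t (fun (u v : ℝ) (k : Fin e) =>
          ∑ α, ∑ β, H' u α k β * bracket X XX₁ u v α β) (Jb s t)) ∧
      (∀ s t : ℝ, 0 ≤ s → s ≤ t → t ≤ T → ∀ k : Fin e,
        Ig s t k = I₁ s t k + Jb s t k / 2) := by
  obtain ⟨hcont, hzero, hsup, hnn⟩ := hω
  have ctl : Sew.Ctl T ω := ⟨hzero, hsup, hnn⟩
  have hp0 : (0:ℝ) < p := lt_of_lt_of_le one_pos hp1
  have hθ : (1:ℝ) < 3/p := (one_lt_div hp0).2 hp3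
  obtain ⟨⟨hXcont, CX, hXb⟩, hXX1cont, ⟨C1, hXX1b⟩, hChen1⟩ := hX₁
  obtain ⟨-, hXX2cont, ⟨C2, hXX2b⟩, hChen2⟩ := hX₂
  obtain ⟨⟨hHcont, CH, hHb⟩, ⟨hH'cont, CH', hH'b⟩, CR, hRb⟩ := hH
  -- normalized nonnegative constants
  have hnorm : ∀ (C' : ℝ) (g : ℝ → ℝ → ℝ) (r : ℝ),
      (∀ s t : ℝ, 0 ≤ s → s ≤ t → t ≤ T → g s t ≤ C' * ω s t ^ r) →
      (∀ s t : ℝ, 0 ≤ s → s ≤ t → t ≤ T → g s t ≤ (max C' 0) * ω s t ^ r) := by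
    intro C' g r hg s t h1 h2 h3
    exact le_trans (hg s t h1 h2 h3) (mul_le_mul_of_nonneg_right (le_max_left _ _)
      (Real.rpow_nonneg (hnn s t h1 h2 h3) _))
  have hXb' := hnorm CX (fun s t => ‖X t - X s‖) (1/p) hXb
  have hXX1b' := hnorm C1 (fun s t => ‖XX₁ s t‖) (2/p) hXX1b
  have hXX2b' := hnorm C2 (fun s t => ‖XX₂ s t‖) (2/p) hXX2b
  have hH'b' := hnorm CH' (fun s t => ‖H' t - H' s‖) (1/p) hH'b
  have hRb' := hnorm CR (fun s t => ‖H t - H s - ∑ γ, (X t γ - X s γ) • H' s γ‖) (2/p) hRb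
  set cX := max CX 0 with hcX
  set c1 := max C1 0 with hc1
  set c2 := max C2 0 with hc2
  set cH' := max CH' 0 with hcH'
  set cR := max CR 0 with hcR
  have hcX0 : 0 ≤ cX := le_max_right _ _
  have hc10 : 0 ≤ c1 := le_max_right _ _
  have hc20 : 0 ≤ c2 := le_max_right _ _
  have hcH'0 : 0 ≤ cH' := le_max_right _ _
  have hcR0 : 0 ≤ cR := le_max_right _ _
  refine ⟨?_, ?_, ?_⟩
  · -- additivity of D
    intro s u t h0 h1 h2 h3 α β
    have e1 := hChen1 s u t h0 h1 h2 h3 α β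
    have e2 := hChen2 s u t h0 h1 h2 h3 α β
    linarith
  · -- bound for D
    refine ⟨c2 + c1, fun s t h1 h2 h3 => ?_⟩
    have heq : (fun (α β : Fin d) => XX₂ s t α β - XX₁ s t α β) = XX₂ s t - XX₁ s t := by
      funext α β; simp
    rw [heq]
    calc ‖XX₂ s t - XX₁ s t‖ ≤ ‖XX₂ s t‖ + ‖XX₁ s t‖ := norm_sub_le _ _
      _ ≤ c2 * ω s t ^ (2/p) + c1 * ω s t ^ (2/p) :=
          add_le_add (hXX2b' s t h1 h2 h3) (hXX1b' s t h1 h2 h3)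
      _ = (c2 + c1) * ω s t ^ (2/p) := by ring
  -- main part
  -- componentwise bounds
  have hXX1comp : ∀ s t : ℝ, 0 ≤ s → s ≤ t → t ≤ T → ∀ α β,
      |XX₁ s t α β| ≤ c1 * ω s t ^ (2/p) := by
    intro s t h1 h2 h3 α β
    calc |XX₁ s t α β| ≤ ‖XX₁ s t α‖ := by
          rw [← Real.norm_eq_abs]; exact norm_le_pi_norm _ β
      _ ≤ ‖XX₁ s t‖ := norm_le_pi_norm _ α
      _ ≤ c1 * ω s t ^ (2/p) := hXX1b' s t h1 h2 h3
  have hXX2comp : ∀ s t : ℝ, 0 ≤ s → s ≤ t → t ≤ T → ∀ α β,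
      |XX₂ s t α β| ≤ c2 * ω s t ^ (2/p) := by
    intro s t h1 h2 h3 α β
    calc |XX₂ s t α β| ≤ ‖XX₂ s t α‖ := by
          rw [← Real.norm_eq_abs]; exact norm_le_pi_norm _ β
      _ ≤ ‖XX₂ s t‖ := norm_le_pi_norm _ α
      _ ≤ c2 * ω s t ^ (2/p) := hXX2b' s t h1 h2 h3
  have hXcomp : ∀ s t : ℝ, 0 ≤ s → s ≤ t → t ≤ T → ∀ β,
      |X t β - X s β| ≤ cX * ω s t ^ (1/p) := by
    intro s t h1 h2 h3 β
    calc |X t β - X s β| = |(X t - X s) β| := rfl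
      _ ≤ ‖X t - X s‖ := by rw [← Real.norm_eq_abs]; exact norm_le_pi_norm _ β
      _ ≤ cX * ω s t ^ (1/p) := hXb' s t h1 h2 h3
  have hsq : ∀ x : ℝ, 0 ≤ x → x ^ ((1:ℝ)/p) * x ^ ((1:ℝ)/p) = x ^ ((2:ℝ)/p) := by
    intro x hx
    rcases eq_or_lt_of_le hx with h | h
    · rw [← h, Real.zero_rpow (by positivity), mul_zero,
        Real.zero_rpow (by positivity)]
    · rw [← Real.rpow_add h]; congr 1; ring
  -- delta bound for the first rough summand
  have hd1 := Sew.rough_delta ctl hp0 X XX₁ H H' hcX0 hc10 hcH'0 hcR0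
    hXb' hXX1b' hChen1 hH'b' hRb'
  -- D := XX₂ - XX₁ : additivity and bound
  have hDadd : ∀ s u t : ℝ, 0 ≤ s → s ≤ u → u ≤ t → t ≤ T → ∀ α β,
      XX₂ s t α β - XX₁ s t α β = (XX₂ s u α β - XX₁ s u α β)
        + (XX₂ u t α β - XX₁ u t α β) := by
    intro s u t h0 h1 h2 h3 α β
    have e1 := hChen1 s u t h0 h1 h2 h3 α β
    have e2 := hChen2 s u t h0 h1 h2 h3 α β
    linarith
  have hDb : ∀ s t : ℝ, 0 ≤ s → s ≤ t → t ≤ T → ∀ α β,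
      |XX₂ s t α β - XX₁ s t α β| ≤ (c2 + c1) * ω s t ^ (2/p) := by
    intro s t h1 h2 h3 α β
    calc |XX₂ s t α β - XX₁ s t α β| ≤ |XX₂ s t α β| + |XX₁ s t α β| := abs_sub _ _
      _ ≤ c2 * ω s t ^ (2/p) + c1 * ω s t ^ (2/p) :=
          add_le_add (hXX2comp s t h1 h2 h3 α β) (hXX1comp s t h1 h2 h3 α β)
      _ = (c2 + c1) * ω s t ^ (2/p) := by ring
  have hdJ := Sew.young_delta ctl hp0 H' (fun u v α β => XX₂ u v α β - XX₁ u v α β)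
    hcH'0 (add_nonneg hc20 hc10) hH'b' hDb hDadd
  -- bracket : additivity and bound
  have hbadd : ∀ s u t : ℝ, 0 ≤ s → s ≤ u → u ≤ t → t ≤ T → ∀ α β,
      bracket X XX₁ s t α β = bracket X XX₁ s u α β + bracket X XX₁ u t α β := by
    intro s u t h0 h1 h2 h3 α β
    simp only [bracket]
    rw [hChen1 s u t h0 h1 h2 h3 α β, hChen1 s u t h0 h1 h2 h3 β α]
    ring
  have hbb : ∀ s t : ℝ, 0 ≤ s → s ≤ t → t ≤ T → ∀ α β,
      |bracket X XX₁ s t α β| ≤ (cX*cX + (c1 + c1)) * ω s t ^ (2/p) := by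
    intro s t h1 h2 h3 α β
    simp only [bracket]
    have hω0 : 0 ≤ ω s t := hnn s t h1 h2 h3
    calc |(X t α - X s α) * (X t β - X s β) - (XX₁ s t α β + XX₁ s t β α)|
        ≤ |(X t α - X s α) * (X t β - X s β)| + |XX₁ s t α β + XX₁ s t β α| := abs_sub _ _
      _ ≤ |X t α - X s α| * |X t β - X s β| + (|XX₁ s t α β| + |XX₁ s t β α|) := by
          rw [abs_mul]
          exact add_le_add le_rfl (abs_add_le _ _)
      _ ≤ (cX * ω s t ^ (1/p)) * (cX * ω s t ^ (1/p))
          + (c1 * ω s t ^ (2/p) + c1 * ω s t ^ (2/p)) := by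
          refine add_le_add (mul_le_mul (hXcomp s t h1 h2 h3 α) (hXcomp s t h1 h2 h3 β)
            (abs_nonneg _) (mul_nonneg hcX0 (Real.rpow_nonneg hω0 _)))
            (add_le_add (hXX1comp s t h1 h2 h3 α β) (hXX1comp s t h1 h2 h3 β α))
      _ = cX*cX * (ω s t ^ ((1:ℝ)/p) * ω s t ^ ((1:ℝ)/p)) + (c1+c1) * ω s t ^ (2/p) := by
          ring
      _ = (cX*cX + (c1 + c1)) * ω s t ^ (2/p) := by rw [hsq _ hω0]; ring
  have hdb := Sew.young_delta ctl hp0 H' (bracket X XX₁)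
    hcH'0 (add_nonneg (mul_nonneg hcX0 hcX0) (add_nonneg hc10 hc10)) hH'b' hbb hbadd
  -- existence of the three limits
  have E1 : ∀ s t : ℝ, ∃ L : Fin e → ℝ, 0 ≤ s → s ≤ t → t ≤ T →
      RSumLimit s t (roughSummand X XX₁ H H') L := by
    intro s t
    by_cases h : 0 ≤ s ∧ s ≤ t ∧ t ≤ T
    · obtain ⟨L, hL⟩ := Sew.exists_rsum ctl hcont hθ
        (add_nonneg (mul_nonneg (mul_nonneg (by positivity) hcR0) hcX0)
          (mul_nonneg (mul_nonneg (by positivity) hcH'0) hc10))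
        hd1 h.1 h.2.1 h.2.2
      exact ⟨L, fun _ _ _ => hL⟩
    · exact ⟨0, fun h1 h2 h3 => absurd ⟨h1, h2, h3⟩ h⟩
  have EJ : ∀ s t : ℝ, ∃ L : Fin e → ℝ, 0 ≤ s → s ≤ t → t ≤ T →
      RSumLimit s t (fun (u v : ℝ) (k : Fin e) =>
        ∑ α, ∑ β, H' u α k β * (XX₂ u v α β - XX₁ u v α β)) L := by
    intro s t
    by_cases h : 0 ≤ s ∧ s ≤ t ∧ t ≤ T
    · obtain ⟨L, hL⟩ := Sew.exists_rsum ctl hcont hθ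
        (mul_nonneg (mul_nonneg (by positivity) hcH'0) (add_nonneg hc20 hc10))
        hdJ h.1 h.2.1 h.2.2
      exact ⟨L, fun _ _ _ => hL⟩
    · exact ⟨0, fun h1 h2 h3 => absurd ⟨h1, h2, h3⟩ h⟩
  have Eb : ∀ s t : ℝ, ∃ L : Fin e → ℝ, 0 ≤ s → s ≤ t → t ≤ T →
      RSumLimit s t (fun (u v : ℝ) (k : Fin e) =>
        ∑ α, ∑ β, H' u α k β * bracket X XX₁ u v α β) L := by
    intro s t
    by_cases h : 0 ≤ s ∧ s ≤ t ∧ t ≤ T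
    · obtain ⟨L, hL⟩ := Sew.exists_rsum ctl hcont hθ
        (mul_nonneg (mul_nonneg (by positivity) hcH'0)
          (add_nonneg (mul_nonneg hcX0 hcX0) (add_nonneg hc10 hc10)))
        hdb h.1 h.2.1 h.2.2
      exact ⟨L, fun _ _ _ => hL⟩
    · exact ⟨0, fun h1 h2 h3 => absurd ⟨h1, h2, h3⟩ h⟩
  set I₁ : ℝ → ℝ → Fin e → ℝ := fun s t => (E1 s t).choose with hI₁def
  set J : ℝ → ℝ → Fin e → ℝ := fun s t => (EJ s t).choose with hJdef
  set Jb : ℝ → ℝ → Fin e → ℝ := fun s t => (Eb s t).choose with hJbdef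
  have hI₁ : ∀ s t : ℝ, 0 ≤ s → s ≤ t → t ≤ T →
      RSumLimit s t (roughSummand X XX₁ H H') (I₁ s t) :=
    fun s t h1 h2 h3 => (E1 s t).choose_spec h1 h2 h3
  have hJ : ∀ s t : ℝ, 0 ≤ s → s ≤ t → t ≤ T →
      RSumLimit s t (fun (u v : ℝ) (k : Fin e) =>
        ∑ α, ∑ β, H' u α k β * (XX₂ u v α β - XX₁ u v α β)) (J s t) :=
    fun s t h1 h2 h3 => (EJ s t).choose_spec h1 h2 h3
  have hJb : ∀ s t : ℝ, 0 ≤ s → s ≤ t → t ≤ T →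
      RSumLimit s t (fun (u v : ℝ) (k : Fin e) =>
        ∑ α, ∑ β, H' u α k β * bracket X XX₁ u v α β) (Jb s t) :=
    fun s t h1 h2 h3 => (Eb s t).choose_spec h1 h2 h3
  -- summand identities
  have hsum2eq : (fun u v => roughSummand X XX₁ H H' u v + (fun k : Fin e =>
      ∑ α, ∑ β, H' u α k β * (XX₂ u v α β - XX₁ u v α β)))
      = roughSummand X XX₂ H H' := by
    funext u v k
    simp only [Pi.add_apply, roughSummand]
    have hx : ∑ α, ∑ β, H' u α k β * XX₁ u v α β
        + ∑ α, ∑ β, H' u α k β * (XX₂ u v α β - XX₁ u v α β)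
        = ∑ α, ∑ β, H' u α k β * XX₂ u v α β := by
      rw [← Finset.sum_add_distrib]
      refine Finset.sum_congr rfl fun α _ => ?_
      rw [← Finset.sum_add_distrib]
      exact Finset.sum_congr rfl fun β _ => by ring
    rw [← hx]
    ring
  have hsumgeq : (fun u v => roughSummand X XX₁ H H' u v + (2⁻¹:ℝ) • (fun k : Fin e =>
      ∑ α, ∑ β, H' u α k β * bracket X XX₁ u v α β))
      = roughSummand X (fun u v α β => (XX₁ u v α β - XX₁ u v β α) / 2 +
          (X v α - X u α) * (X v β - X u β) / 2) H H' := by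
    funext u v k
    simp only [Pi.add_apply, Pi.smul_apply, smul_eq_mul, roughSummand]
    have hx : ∑ α, ∑ β, H' u α k β * XX₁ u v α β
        + 2⁻¹ * ∑ α, ∑ β, H' u α k β * bracket X XX₁ u v α β
        = ∑ α, ∑ β, H' u α k β * ((XX₁ u v α β - XX₁ u v β α) / 2 +
            (X v α - X u α) * (X v β - X u β) / 2) := by
      rw [Finset.mul_sum, ← Finset.sum_add_distrib]
      refine Finset.sum_congr rfl fun α _ => ?_
      rw [Finset.mul_sum, ← Finset.sum_add_distrib]
      refine Finset.sum_congr rfl fun β _ => ?_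
      simp only [bracket]
      ring
    rw [← hx]
    ring
  refine ⟨I₁, fun s t => I₁ s t + J s t, J, fun s t => I₁ s t + (2⁻¹:ℝ) • Jb s t, Jb,
    hI₁, ?_, hJ, fun _ _ _ _ _ => rfl, ?_, hJb, ?_⟩
  · intro s t h1 h2 h3
    exact Sew.rsl_congr hsum2eq (Sew.rsl_add (hI₁ s t h1 h2 h3) (hJ s t h1 h2 h3))
  · intro s t h1 h2 h3
    exact Sew.rsl_congr hsumgeq
      (Sew.rsl_add (hI₁ s t h1 h2 h3) (Sew.rsl_smul _ (hJb s t h1 h2 h3)))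
  · intro s t h1 h2 h3 k
    simp only [Pi.add_apply, Pi.smul_apply, smul_eq_mul]
    ring
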